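/- Let PI be any set of problem instances (K, O, q) that contains all instances in which K = ∅, O is an EL knowledge base, and q is an EL inclusion (possibly sharing role names with O). Then there exists no shifting IBQ mechanism for PI. -/

import Mathlib

/-! The description logic EL, used to show that no shifting IBQ mechanism exists
    when queries may share role names with the imported ontology. -/

namespace IBQEL

/-- EL concepts: concept names, `⊤`, intersections, existential restrictions. -/
inductive Cpt : Type
  | atom : ℕ → Cpt
  | top : Cpt
  | and : Cpt → Cpt → Cpt
  | ex : ℕ → Cpt → Cpt

/-- An EL inclusion (GCI); an EL knowledge base is a set of these. -/
abbrev Ax := Cpt × Cpt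

structure Interp : Type 1 where
  Δ : Type
  nonempty : Nonempty Δ
  conc : ℕ → Set Δ
  role : ℕ → Set (Δ × Δ)

def Cpt.sem (I : Interp) : Cpt → Set I.Δ
  | .atom a => I.conc a
  | .top => Set.univ
  | .and c d => c.sem I ∩ d.sem I
  | .ex r c => {x | ∃ y, (x, y) ∈ I.role r ∧ y ∈ c.sem I}

def Interp.sat (I : Interp) (K : Set Ax) : Prop :=
  ∀ ax ∈ K, Cpt.sem I ax.1 ⊆ Cpt.sem I ax.2

/-- `K ∪ O ⊨ q`. -/
def entails (K O : Set Ax) (q : Ax) : Prop :=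
  ∀ I : Interp, I.sat K → I.sat O → Cpt.sem I q.1 ⊆ Cpt.sem I q.2

def Cpt.cNames : Cpt → Set ℕ
  | .atom a => {a}
  | .and c d => c.cNames ∪ d.cNames
  | .ex _ c => c.cNames
  | _ => ∅

def sigC (K : Set Ax) : Set ℕ := {n | ∃ ax ∈ K, n ∈ Cpt.cNames ax.1 ∪ Cpt.cNames ax.2}

/-- An oracle query `A₁ ⊓ … ⊓ A_m ⊑ A_{m+1} ⊔ … ⊔ Aₙ` (rhs `⊥` when empty). -/
structure OQuery : Type where
  lhs : List ℕ
  rhs : List ℕ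

def Interp.satQ (I : Interp) (q : OQuery) : Prop :=
  {d | ∀ a ∈ q.lhs, d ∈ I.conc a} ⊆ {d | ∃ b ∈ q.rhs, d ∈ I.conc b}

/-- `pos(O')`: the queries over the concept names of `sig(O')` entailed by `O'`. -/
def pos (O : Set Ax) : Set OQuery :=
  {q | (∀ a ∈ q.lhs, a ∈ sigC O) ∧ (∀ b ∈ q.rhs, b ∈ sigC O) ∧
     ∀ I : Interp, I.sat O → I.satQ q}

/-- A problem instance `(K, O, q)`. -/
abbrev Inst := Set Ax × Set Ax × Ax

/-- `(s, r)` is a shifting IBQ mechanism for `PI`: for every `(K, O, q) ∈ PI`,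
    (1) `s(K) ⊆ K`, and (2) `r(s(K), pos(O ∪ (K \ s(K))), q) = true` iff `K ∪ O ⊨ q`. -/
def Mechanism (PI : Set Inst) (s : Set Ax → Set Ax)
    (r : Set Ax → Set OQuery → Ax → Bool) : Prop :=
  ∀ p ∈ PI, s p.1 ⊆ p.1 ∧
    (r (s p.1) (pos (p.2.1 ∪ (p.1 \ s p.1))) p.2.2 = true ↔ entails p.1 p.2.1 p.2.2)

/-- let `PI` be any set of problem instances containing all instances
    `(∅, O, q)` in which `O` is an EL knowledge base and `q` is an EL inclusion
    (possibly sharing role names with `O`). Then there is no shifting IBQ mechanism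
    for `PI`. -/
theorem statement_19 (PI : Set Inst)
    (hPI : ∀ (O : Set Ax) (q : Ax), O.Finite → ((∅ : Set Ax), O, q) ∈ PI) :
    ¬ ∃ (s : Set Ax → Set Ax) (r : Set Ax → Set OQuery → Ax → Bool),
        Mechanism PI s r := by
  intro ⟨s, r, hM⟩
  -- The witness ontology and query
  set q : Ax := (Cpt.top, Cpt.ex 0 Cpt.top) with hq
  set O1 : Set Ax := {q} with hO1
  -- s ∅ = ∅
  have hs : s (∅ : Set Ax) = ∅ := by
    have := (hM (∅, O1, q) (hPI O1 q (Set.finite_singleton q))).1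
    exact Set.subset_empty_iff.mp this
  -- a model where all roles are total
  have Itot : Interp := ⟨Unit, ⟨()⟩, fun _ => ∅, fun _ => Set.univ⟩
  -- sigC O1 = ∅
  have hsig : sigC O1 = ∅ := by
    ext n
    simp only [sigC, Set.mem_setOf_eq, Set.mem_empty_iff_false, iff_false]
    rintro ⟨ax, hax, hn⟩
    rw [hO1, Set.mem_singleton_iff] at hax
    subst hax
    simp [Cpt.cNames, hq] at hn
  have hsig0 : sigC (∅ : Set Ax) = ∅ := by
    ext n
    simp only [sigC, Set.mem_setOf_eq, Set.mem_empty_iff_false, iff_false]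
    rintro ⟨ax, hax, _⟩
    exact hax
  -- total-role model, satisfies O1, fails any query with empty rhs
  let J : Interp := ⟨Unit, ⟨()⟩, fun _ => ∅, fun _ => Set.univ⟩
  have hJsat : J.sat O1 := by
    intro ax hax
    rw [hO1, Set.mem_singleton_iff] at hax
    subst hax
    intro x _
    exact ⟨(), Set.mem_univ _, Set.mem_univ _⟩
  have hJnot : ∀ qq : OQuery, qq.lhs = [] → qq.rhs = [] → ¬ J.satQ qq := by
    intro qq h1 h2 hsatq
    have : (() : Unit) ∈ {d : J.Δ | ∀ a ∈ qq.lhs, d ∈ J.conc a} := by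
      intro a ha; rw [h1] at ha; exact absurd ha List.not_mem_nil
    obtain ⟨b, hb, _⟩ := hsatq this
    rw [h2] at hb
    exact absurd hb List.not_mem_nil
  -- pos of both O1 and ∅ is empty
  have hposempty : ∀ O : Set Ax, sigC O = ∅ → J.sat O → pos O = ∅ := by
    intro O hO hJ
    ext qq
    simp only [pos, Set.mem_setOf_eq, Set.mem_empty_iff_false, iff_false]
    rintro ⟨hl, hr, hent⟩
    have hl' : qq.lhs = [] := by
      cases hlhs : qq.lhs with
      | nil => rfl
      | cons a t =>
        exfalso
        have := hl a (by rw [hlhs]; exact List.mem_cons_self)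
        rw [hO] at this; exact this
    have hr' : qq.rhs = [] := by
      cases hrhs : qq.rhs with
      | nil => rfl
      | cons a t =>
        exfalso
        have := hr a (by rw [hrhs]; exact List.mem_cons_self)
        rw [hO] at this; exact this
    exact hJnot qq hl' hr' (hent J hJ)
  have hempty_sat : J.sat (∅ : Set Ax) := by intro ax hax; exact absurd hax (Set.notMem_empty ax)
  have hpos1 : pos (O1 ∪ ((∅ : Set Ax) \ s ∅)) = ∅ := by
    rw [hs, Set.empty_diff, Set.union_empty]
    exact hposempty O1 hsig hJsat
  have hpos0 : pos ((∅ : Set Ax) ∪ ((∅ : Set Ax) \ s ∅)) = ∅ := by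
    rw [hs, Set.empty_diff, Set.union_empty]
    exact hposempty ∅ hsig0 hempty_sat
  -- entailment facts
  have hent1 : entails (∅ : Set Ax) O1 q := by
    intro I _ hIO
    exact hIO q (by rw [hO1]; exact Set.mem_singleton q)
  have hent0 : ¬ entails (∅ : Set Ax) (∅ : Set Ax) q := by
    intro h
    let I : Interp := ⟨Unit, ⟨()⟩, fun _ => ∅, fun _ => ∅⟩
    have hIe : I.sat (∅ : Set Ax) := fun ax hax => absurd hax (Set.notMem_empty ax)
    have := h I hIe hIe (show (() : Unit) ∈ Cpt.sem I q.1 from Set.mem_univ _)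
    obtain ⟨y, hy, _⟩ := this
    exact absurd hy (Set.notMem_empty _)
  -- derive contradiction
  have h1 := (hM (∅, O1, q) (hPI O1 q (Set.finite_singleton q))).2
  have h0 := (hM (∅, ∅, q) (hPI ∅ q Set.finite_empty)).2
  simp only at h1 h0
  rw [hpos1, hs] at h1
  rw [hpos0, hs] at h0
  exact hent0 (h0.mp (h1.mpr hent1))


end IBQEL
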